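/- Fix k ≥ 1 and n ≥ 2, and consider the Algorithm 3 transition system. If in a configuration c₀ exactly one agent has label in {S, S'}, then in every configuration reachable from c₀ exactly one agent has label in {S, S'}. -/
import Mathlib


/-- Labels of Algorithm 3. -/
inductive Alg3.Label : Type
  | S | S' | R | u | ubar
deriving DecidableEq

/-- Agent state of Algorithm 3: a secret, a mask, and a label. -/
structure Alg3.AgentState (k : ℕ) : Type where
  secret : Option (ZMod k)
  mask : Option (ZMod k)
  label : Alg3.Label

/-- A configuration: the state of each of the `n` agents. -/
abbrev Alg3.Config (k n : ℕ) : Type := Fin n → Alg3.AgentState k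

open Alg3 in
/-- A single step of Algorithm 3 between a distinct initiator `i` and responder `j`. -/
inductive Alg3.Step (k n : ℕ) : Config k n → Config k n → Prop
  | r1 (c : Config k n) (i j : Fin n) (hij : i ≠ j) (σ : Option (ZMod k)) (r r' : ZMod k)
      (hi : c i = ⟨σ, some r, Label.S⟩) (hj : (c j).label = Label.ubar) :
      Step k n c (Function.update c i ⟨σ, some r', Label.S⟩)
  | r2 (c : Config k n) (i j : Fin n) (hij : i ≠ j) (μ r v : ZMod k) (ρj : Option (ZMod k))
      (hi : c i = ⟨some μ, some r, Label.S⟩) (hj : c j = ⟨some v, ρj, Label.u⟩) :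
      Step k n c (Function.update (Function.update c i ⟨none, some (μ - r), Label.S'⟩)
        j ⟨some (v + r), ρj, Label.R⟩)
  | r3 (c : Config k n) (i j : Fin n) (hij : i ≠ j) (x y : ZMod k) (ρj : Option (ZMod k))
      (hi : c i = ⟨none, some x, Label.S'⟩) (hj : c j = ⟨some y, ρj, Label.R⟩) :
      Step k n c (Function.update (Function.update c i ⟨none, none, Label.ubar⟩)
        j ⟨some (x + y), ρj, Label.S⟩)
  | r4 (c : Config k n) (i j : Fin n) (hij : i ≠ j) (hi : (c i).label = Label.ubar) :
      Step k n c (Function.update c i ⟨(c i).secret, (c i).mask, Label.u⟩)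

/-- Reachability: the reflexive–transitive closure of single steps. -/
def Alg3.Reachable (k n : ℕ) : Alg3.Config k n → Alg3.Config k n → Prop :=
  Relation.ReflTransGen (Alg3.Step k n)


open Alg3 Finset in
lemma Alg3.step_pres {k n : ℕ} {c c' : Config k n} (h : Step k n c c')
    (h1 : (Finset.univ.filter
        (fun i => (c i).label = Label.S ∨ (c i).label = Label.S')).card = 1) :
    (Finset.univ.filter
        (fun i => (c' i).label = Label.S ∨ (c' i).label = Label.S')).card = 1 := by
  cases h with
  | r1 i j hij σ r r' hi hj =>
    convert h1 using 2
    ext x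
    rcases eq_or_ne x i with rfl | hxi
    · simp [Function.update_self, hi]
    · simp [Function.update_of_ne hxi]
  | r2 i j hij μ r v ρj hi hj =>
    convert h1 using 2
    ext x
    rcases eq_or_ne x j with rfl | hxj
    · simp [Function.update_self, hj]
    · rcases eq_or_ne x i with rfl | hxi
      · simp [Function.update_of_ne hxj, Function.update_self, hi]
      · simp [Function.update_of_ne hxj, Function.update_of_ne hxi]
  | r3 i j hij x y ρj hi hj =>
    have hiS : i ∈ Finset.univ.filter
        (fun a => (c a).label = Label.S ∨ (c a).label = Label.S') := by
      simp [hi]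
    obtain ⟨a, ha⟩ := Finset.card_eq_one.mp h1
    rw [ha] at hiS
    rw [show a = i from (Finset.mem_singleton.mp hiS).symm] at ha
    have : Finset.univ.filter
        (fun z => ((Function.update (Function.update c i ⟨none, none, Label.ubar⟩)
          j ⟨some (x + y), ρj, Label.S⟩) z).label = Label.S ∨
          ((Function.update (Function.update c i ⟨none, none, Label.ubar⟩)
          j ⟨some (x + y), ρj, Label.S⟩) z).label = Label.S') = {j} := by
      ext z
      simp only [Finset.mem_filter, Finset.mem_univ, true_and, Finset.mem_singleton]
      rcases eq_or_ne z j with rfl | hzj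
      · simp [Function.update_self]
      · rcases eq_or_ne z i with rfl | hzi
        · simp [Function.update_of_ne hij, Function.update_self, hzj]
        · have hz : z ∉ ({i} : Finset (Fin n)) := by simpa using hzi
          rw [← ha] at hz
          simp only [Finset.mem_filter, Finset.mem_univ, true_and] at hz
          simp [Function.update_of_ne hzj, Function.update_of_ne hzi, hz, hzj]
    rw [this, Finset.card_singleton]
  | r4 i j hij hi =>
    convert h1 using 2
    ext z
    rcases eq_or_ne z i with rfl | hzi
    · simp [Function.update_self, hi]
    · simp [Function.update_of_ne hzi]

open Alg3 in
/-- If exactly one agent has label in `{S, S'}` in `c₀`, then the same holds in every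
configuration reachable from `c₀`. -/
theorem stmt6 (k n : ℕ) (hk : 1 ≤ k) (hn : 2 ≤ n)
    (c₀ c : Config k n)
    (h₀ : (Finset.univ.filter
        (fun i => (c₀ i).label = Label.S ∨ (c₀ i).label = Label.S')).card = 1)
    (hreach : Reachable k n c₀ c) :
    (Finset.univ.filter
        (fun i => (c i).label = Label.S ∨ (c i).label = Label.S')).card = 1 := by
  induction hreach with
  | refl => exact h₀
  | tail _ hstep ih => exact Alg3.step_pres hstep ih
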